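/- Let n ≥ 2 be an integer and a an integer. If the Laurent polynomial identity (1-t)^n + (1-t^{-1})^n + a·(2 - t - t^{-1})·((1-t^{-1})^{n-2} + (1-t)^{n-2}) = (2 - t - t^{-1})^n holds in ℤ[t, t^{-1}], then n = 2 and a = 1, or n = 3 and a = 3. -/

import Mathlib

/-!
STATEMENT 0: For an integer `n ≥ 2` and `a : ℤ`, if the Laurent polynomial identity
`(1-t)^n + (1-t⁻¹)^n + a·(2 - t - t⁻¹)·((1-t⁻¹)^(n-2) + (1-t)^(n-2)) = (2 - t - t⁻¹)^n`
holds in `ℤ[t,t⁻¹]`, then `n = 2 ∧ a = 1` or `n = 3 ∧ a = 3`.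
-/

open LaurentPolynomial

noncomputable def lev (u : ℚˣ) : LaurentPolynomial ℤ →ₐ[ℤ] ℚ :=
  AddMonoidAlgebra.lift ℤ ℚ ℤ ((Units.coeHom ℚ).comp (zpowersHom ℚˣ u))

lemma lev_T (u : ℚˣ) (m : ℤ) : lev u (T m) = ((u ^ m : ℚˣ) : ℚ) := by
  rw [lev, LaurentPolynomial.T, AddMonoidAlgebra.lift_single, MonoidHom.comp_apply,
    zpowersHom_apply, toAdd_ofAdd, one_smul, Units.coeHom_apply]

theorem bandwidth3_isolated_fixed_points_euler_identity
    (n : ℕ) (hn : 2 ≤ n) (a : ℤ)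
    (h : ((1 : LaurentPolynomial ℤ) - T 1) ^ n + (1 - T (-1)) ^ n
        + (a : LaurentPolynomial ℤ) * (2 - T 1 - T (-1))
          * ((1 - T (-1)) ^ (n - 2) + (1 - T 1) ^ (n - 2))
        = (2 - T 1 - T (-1)) ^ n) :
    (n = 2 ∧ a = 1) ∨ (n = 3 ∧ a = 3) := by
  obtain ⟨k, rfl⟩ : ∃ k, n = k + 2 := ⟨n - 2, by omega⟩
  rw [Nat.add_sub_cancel] at h
  have h1 := congrArg (lev (-1)) h
  have h2 := congrArg (lev (Units.mk0 2 (by norm_num))) h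
  simp only [map_add, map_mul, map_pow, map_sub, map_one, map_intCast, map_ofNat, lev_T] at h1 h2
  norm_num at h1 h2
  -- h1 : 2 ^ (k + 2) + 2 ^ (k + 2) + ↑a * 4 * (2 ^ k + 2 ^ k) = 4 ^ (k + 2)
  -- h2 : (-1) ^ (k + 2) + (1/2) ^ (k + 2) + -(↑a * (1/2) * ((1/2) ^ k + (-1) ^ k)) = (-(1/2)) ^ (k+2)
  set c : ℚ := 2 ^ k with hcdef
  set s : ℚ := (-1) ^ k with hsdef
  have hc : 0 < c := by positivity
  have p2 : (2:ℚ) ^ (k+2) = c * 4 := by rw [pow_add, ← hcdef]; norm_num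
  have p4 : (4:ℚ) ^ (k+2) = (c*4) * (c*4) := by
    rw [← p2, ← mul_pow]; norm_num
  have ps : (-1:ℚ) ^ (k+2) = s := by rw [pow_add, ← hsdef]; norm_num
  have hic : ((1:ℚ)/2) ^ k = c⁻¹ := by rw [one_div, inv_pow]
  have hic2 : ((1:ℚ)/2) ^ (k+2) = c⁻¹ * (1/4) := by rw [pow_add, hic]; norm_num
  have pm : (-(1/2):ℚ) ^ (k+2) = s * (c⁻¹ * (1/4)) := by
    rw [show (-(1/2):ℚ) = (-1) * (1/2) by norm_num, mul_pow, ps, hic2]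
  rw [p2, p4] at h1
  rw [ps, hic2, hic, pm] at h2
  have ha : (a:ℚ) = 2 * c - 1 := by
    have h1' : (8*c) * ((a:ℚ) + 1) = (8*c) * (2*c) := by linear_combination h1
    have := mul_left_cancel₀ (by positivity : (8:ℚ)*c ≠ 0) h1'
    linarith
  rw [ha] at h2
  have hcne : c ≠ 0 := hc.ne'
  have hcc : c⁻¹ * c = 1 := inv_mul_cancel₀ hcne
  have key : 4*c*s + 1 - 2*(2*c-1)*(1+c*s) = s := by
    linear_combination (4*c) * h2 + (2*(2*c-1) + s - 1) * hcc
  have hk : k < 2 := by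
    by_contra hk
    push_neg at hk
    have hcge : (4:ℚ) ≤ c := by
      calc (4:ℚ) = 2 ^ 2 := by norm_num
      _ ≤ 2 ^ k := pow_le_pow_right₀ (by norm_num) hk
    have hs : s = 1 ∨ s = -1 := by
      rcases Nat.even_or_odd k with he | ho
      · exact Or.inl he.neg_one_pow
      · exact Or.inr ho.neg_one_pow
    rcases hs with hs | hs <;> rw [hs] at key <;> nlinarith [key, hcge]
  interval_cases k
  · left
    refine ⟨rfl, ?_⟩
    have : (a:ℚ) = 1 := by rw [ha]; norm_num [hcdef]
    exact_mod_cast this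
  · right
    refine ⟨rfl, ?_⟩
    have : (a:ℚ) = 3 := by rw [ha]; norm_num [hcdef]
    exact_mod_cast this
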